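/- arXiv:1003.1880 — 2 statements merged into one kernel-verified Lean document; each statement's English description precedes it below -/
import Mathlib

section
/- Let Ω ⊂ ℂ be a bounded smooth domain, a, ψ, ψ₀ ∈ C²(closure(Ω)) with ψ = ψ₀ on ∂Ω, Δψ₀ = 0 in Ω, and −Δψ + qψ = 0 in Ω for a continuous q. Then ∫_{∂Ω} a (∂ψ/∂ν − ∂ψ₀/∂ν) ds = 2i ∫_{∂Ω} a (∂̄ψ − ∂̄ψ₀), where the right-hand side is a contour integral of the 1-form a(∂z̄ψ − ∂z̄ψ₀) dz̄ over ∂Ω oriented counterclockwise. -/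
open Complex MeasureTheory

noncomputable def dxC (f : ℂ → ℂ) (z : ℂ) : ℂ := fderiv ℝ f z 1
noncomputable def dyC (f : ℂ → ℂ) (z : ℂ) : ℂ := fderiv ℝ f z Complex.I
noncomputable def dzbar (f : ℂ → ℂ) (z : ℂ) : ℂ := (dxC f z + Complex.I * dyC f z) / 2
noncomputable def lapC (f : ℂ → ℂ) (z : ℂ) : ℂ := dxC (dxC f) z + dyC (dyC f) z

/-- key Lemma: for a, ψ, ψ₀ C² on a neighborhood of closure Ω with
ψ = ψ₀ on ∂Ω, Δψ₀ = 0 and −Δψ + qψ = 0 in Ω,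
∫_{∂Ω} a (∂ψ/∂ν − ∂ψ₀/∂ν) ds = 2i ∫_{∂Ω} a (∂̄ψ − ∂̄ψ₀).
The boundary is parametrized counterclockwise by the C¹ loop γ; along γ,
∂f/∂ν ds = (∂x f · (γ')_y − ∂y f · (γ')_x) dt and dz̄ pulls back to conj(γ'(t)) dt. -/
theorem normal_derivative_eq_dbar_contour
    (Ω : Set ℂ) (hΩo : IsOpen Ω) (hΩc : IsConnected Ω)
    (hΩb : Bornology.IsBounded Ω)
    (γ : ℝ → ℂ) (hγ : ContDiff ℝ 1 γ) (hγp : γ 0 = γ 1)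
    (hγim : γ '' Set.Icc (0 : ℝ) 1 = frontier Ω)
    (U : Set ℂ) (hU : IsOpen U) (hUc : closure Ω ⊆ U)
    (a ψ ψ₀ : ℂ → ℂ) (q : ℂ → ℂ) (hq : Continuous q)
    (ha : ContDiffOn ℝ 2 a U) (hψ : ContDiffOn ℝ 2 ψ U) (hψ₀ : ContDiffOn ℝ 2 ψ₀ U)
    (hbd : ∀ z ∈ frontier Ω, ψ z = ψ₀ z)
    (hψ₀h : ∀ z ∈ Ω, lapC ψ₀ z = 0)
    (hψs : ∀ z ∈ Ω, -lapC ψ z + q z * ψ z = 0) :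
    (∫ t in (0:ℝ)..1,
        a (γ t) *
          ((dxC ψ (γ t) - dxC ψ₀ (γ t)) * ((deriv γ t).im : ℂ)
            - (dyC ψ (γ t) - dyC ψ₀ (γ t)) * ((deriv γ t).re : ℂ)))
      = 2 * Complex.I *
          ∫ t in (0:ℝ)..1,
            a (γ t) * (dzbar ψ (γ t) - dzbar ψ₀ (γ t)) * (starRingEnd ℂ) (deriv γ t) := by
  rw [← intervalIntegral.integral_const_mul]
  apply intervalIntegral.integral_congr_ae
  have h1 : ∀ᵐ t : ℝ ∂volume, t ≠ (1:ℝ) := by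
    rw [ae_iff]
    simp [Set.setOf_eq_eq_singleton']
  filter_upwards [h1] with t ht htmem
  rw [Set.uIoc_of_le (by norm_num : (0:ℝ) ≤ 1)] at htmem
  have ht0 : 0 < t := htmem.1
  have ht1 : t < 1 := lt_of_le_of_ne htmem.2 ht
  set z := γ t with hz
  have hzfr : z ∈ frontier Ω := by
    rw [← hγim]; exact ⟨t, ⟨le_of_lt ht0, le_of_lt ht1⟩, rfl⟩
  have hzU : z ∈ U := hUc (frontier_subset_closure hzfr)
  have hnh : U ∈ nhds z := hU.mem_nhds hzU
  have hψd : DifferentiableAt ℝ ψ z :=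
    ((hψ.differentiableOn (by norm_num)).differentiableAt hnh)
  have hψ₀d : DifferentiableAt ℝ ψ₀ z :=
    ((hψ₀.differentiableOn (by norm_num)).differentiableAt hnh)
  have hγd : DifferentiableAt ℝ γ t := hγ.differentiable (by norm_num) t
  -- derivative of (ψ - ψ₀) ∘ γ at t
  have hcomp : HasDerivAt (fun s => ψ (γ s) - ψ₀ (γ s))
      (fderiv ℝ ψ z (deriv γ t) - fderiv ℝ ψ₀ z (deriv γ t)) t :=
    (hψd.hasFDerivAt.comp_hasDerivAt t hγd.hasDerivAt).sub
      (hψ₀d.hasFDerivAt.comp_hasDerivAt t hγd.hasDerivAt)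
  have hev : (fun s => ψ (γ s) - ψ₀ (γ s)) =ᶠ[nhds t] (fun _ => (0:ℂ)) := by
    filter_upwards [Ioo_mem_nhds ht0 ht1] with s hs
    have : γ s ∈ frontier Ω := by
      rw [← hγim]; exact ⟨s, ⟨le_of_lt hs.1, le_of_lt hs.2⟩, rfl⟩
    rw [hbd _ this, sub_self]
  have hder0 : fderiv ℝ ψ z (deriv γ t) - fderiv ℝ ψ₀ z (deriv γ t) = 0 := by
    rw [← hcomp.deriv, hev.deriv_eq]
    simp
  -- decompose deriv γ t into real and imaginary parts
  have hsplit : ∀ f : ℂ → ℂ, DifferentiableAt ℝ f z →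
      fderiv ℝ f z (deriv γ t) =
        ((deriv γ t).re : ℂ) * dxC f z + ((deriv γ t).im : ℂ) * dyC f z := by
    intro f hf
    have h : deriv γ t = (deriv γ t).re • (1:ℂ) + (deriv γ t).im • Complex.I := by
      simp [Complex.real_smul, Complex.re_add_im]
    conv_lhs => rw [h, map_add, (fderiv ℝ f z).map_smul, (fderiv ℝ f z).map_smul]
    rw [dxC, dyC, Complex.real_smul, Complex.real_smul]
  have K : ((deriv γ t).re : ℂ) * (dxC ψ z - dxC ψ₀ z)
      + ((deriv γ t).im : ℂ) * (dyC ψ z - dyC ψ₀ z) = 0 := by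
    have := hder0
    rw [hsplit ψ hψd, hsplit ψ₀ hψ₀d] at this
    linear_combination this
  have hconj : (starRingEnd ℂ) (deriv γ t)
      = ((deriv γ t).re : ℂ) - ((deriv γ t).im : ℂ) * Complex.I := by
    apply Complex.ext <;> simp
  simp only [dzbar, hconj]
  linear_combination (-Complex.I * a (γ t)) * K +
    (a (γ t) * ((dxC ψ z - dxC ψ₀ z) * ((deriv γ t).im : ℂ)
      - (dyC ψ z - dyC ψ₀ z) * ((deriv γ t).re : ℂ)
      + Complex.I * (dyC ψ z - dyC ψ₀ z) * ((deriv γ t).im : ℂ))) * Complex.I_sq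
end

section
/- Let b : ℂ → ℂ be continuous and compactly supported, w ∈ ℂ fixed, and suppose μ(w,·) solves the integral equation μ(w,λ) = 1 + (1/(8π²i)) ∫_ℂ (b(λ')/((λ'−λ)λ̄')) e^{λ̄'w̄ − λ'w} conj(μ(w,λ')) dλ' ∧ dλ̄' with μ(w,·) bounded. Then λ ↦ μ(w,λ) − 1 tends to 0 as |λ| → ∞. -/
open Complex MeasureTheory Filter

-- F x = |x| ^ (-1/2)
lemma aux_F_int (R : ℝ) (hR : 0 < R) :
    IntegrableOn (fun x : ℝ => |x| ^ (-2⁻¹ : ℝ)) (Set.Icc (-R) R) volume := by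
  have hioc : IntegrableOn (fun x : ℝ => |x| ^ (-2⁻¹ : ℝ)) (Set.Ioc 0 R) volume := by
    have := (intervalIntegral.intervalIntegrable_rpow' (a := 0) (b := R)
      (by norm_num : (-1:ℝ) < -2⁻¹)).1
    refine this.congr_fun (fun x hx => ?_) measurableSet_Ioc
    rw [abs_of_pos hx.1]
  have hicc : IntegrableOn (fun x : ℝ => |x| ^ (-2⁻¹ : ℝ)) (Set.Icc 0 R) volume :=
    hioc.congr_set_ae Ioc_ae_eq_Icc.symm
  have hneg : IntegrableOn (fun x : ℝ => |x| ^ (-2⁻¹ : ℝ)) (Set.Ico (-R) 0) volume := by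
    have hmp : MeasurePreserving (fun x : ℝ => -x) volume volume :=
      Measure.measurePreserving_neg _
    have := (hmp.integrableOn_comp_preimage
      (MeasurableEquiv.neg ℝ).measurableEmbedding
      (f := fun x : ℝ => |x| ^ (-2⁻¹ : ℝ)) (s := Set.Ioc 0 R)).2 hioc
    have hpre : (fun x : ℝ => -x) ⁻¹' (Set.Ioc 0 R) = Set.Ico (-R) 0 := by
      ext x
      simp only [Set.mem_preimage, Set.mem_Ioc, Set.mem_Ico]
      constructor
      · rintro ⟨h1, h2⟩; exact ⟨by linarith, by linarith⟩
      · rintro ⟨h1, h2⟩; exact ⟨by linarith, by linarith⟩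
    rw [hpre] at this
    refine this.congr_fun (fun x hx => ?_) measurableSet_Ico
    simp [Function.comp, abs_neg]
  have : Set.Ico (-R) 0 ∪ Set.Icc 0 R = Set.Icc (-R) R :=
    Set.Ico_union_Icc_eq_Icc (by linarith) (le_of_lt hR)
  rw [← this]
  exact hneg.union hicc

lemma aux_axes_null : volume {z : ℂ | z.re = 0 ∨ z.im = 0} = 0 := by
  have h1 : volume {z : ℂ | z.re = 0} = 0 := by
    have : {z : ℂ | z.re = 0} =
        Complex.measurableEquivRealProd ⁻¹' (({0} : Set ℝ) ×ˢ (Set.univ : Set ℝ)) := by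
      ext z; simp [Complex.measurableEquivRealProd, Complex.equivRealProd, eq_comm]
    rw [this, Complex.volume_preserving_equiv_real_prod.measure_preimage
      (((MeasurableSet.singleton 0).prod MeasurableSet.univ).nullMeasurableSet)]
    rw [Measure.volume_eq_prod, Measure.prod_prod]
    simp
  have h2 : volume {z : ℂ | z.im = 0} = 0 := by
    have : {z : ℂ | z.im = 0} =
        Complex.measurableEquivRealProd ⁻¹' ((Set.univ : Set ℝ) ×ˢ ({0} : Set ℝ)) := by
      ext z; simp [Complex.measurableEquivRealProd, Complex.equivRealProd, eq_comm]
    rw [this, Complex.volume_preserving_equiv_real_prod.measure_preimage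
      ((MeasurableSet.univ.prod (MeasurableSet.singleton 0)).nullMeasurableSet)]
    rw [Measure.volume_eq_prod, Measure.prod_prod]
    simp
  have : {z : ℂ | z.re = 0 ∨ z.im = 0} ⊆ {z : ℂ | z.re = 0} ∪ {z : ℂ | z.im = 0} := by
    intro z hz; exact hz
  exact measure_mono_null this (by rw [measure_union_null_iff]; exact ⟨h1, h2⟩)

lemma aux_key (b : ℂ → ℂ) (hb : Continuous b) (hbs : HasCompactSupport b) :
    Integrable (fun z : ℂ => ‖b z‖ * (‖z‖)⁻¹) := by
  obtain ⟨R', hR'⟩ := hbs.isCompact.isBounded.subset_closedBall 0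
  obtain ⟨B, hB⟩ := hbs.exists_bound_of_continuous hb
  set R : ℝ := |R'| + 1 with hRdef
  have hR : 0 < R := by positivity
  -- integrable product on the square
  have hF := aux_F_int R hR
  have hprod : IntegrableOn (fun p : ℝ × ℝ => |p.1| ^ (-2⁻¹ : ℝ) * |p.2| ^ (-2⁻¹ : ℝ))
      (Set.Icc (-R) R ×ˢ Set.Icc (-R) R) volume := by
    have := hF.mul_prod hF
    rwa [Measure.prod_restrict, ← Measure.volume_eq_prod] at this
  set T : Set ℂ := Complex.measurableEquivRealProd ⁻¹' (Set.Icc (-R) R ×ˢ Set.Icc (-R) R)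
    with hTdef
  have hG : IntegrableOn (fun z : ℂ => |z.re| ^ (-2⁻¹ : ℝ) * |z.im| ^ (-2⁻¹ : ℝ)) T volume := by
    have := (Complex.volume_preserving_equiv_real_prod.integrableOn_comp_preimage
      Complex.measurableEquivRealProd.measurableEmbedding
      (f := fun p : ℝ × ℝ => |p.1| ^ (-2⁻¹ : ℝ) * |p.2| ^ (-2⁻¹ : ℝ))
      (s := Set.Icc (-R) R ×ˢ Set.Icc (-R) R)).2 hprod
    refine this.congr_fun (fun z _ => ?_) (Complex.measurableEquivRealProd.measurableSet_preimage.2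
      (measurableSet_Icc.prod measurableSet_Icc))
    simp [Function.comp, Complex.measurableEquivRealProd, Complex.equivRealProd]
  -- bound on T
  have hTmeas : MeasurableSet T :=
    Complex.measurableEquivRealProd.measurableSet_preimage.2
      (measurableSet_Icc.prod measurableSet_Icc)
  have hIT : IntegrableOn (fun z : ℂ => ‖b z‖ * (‖z‖)⁻¹) T volume := by
    refine Integrable.mono' (hG.const_mul B) ?_ ?_
    · exact (hb.norm.measurable.mul
        continuous_norm.measurable.inv).aestronglyMeasurable
    · have hae : ∀ᵐ z : ℂ ∂volume, ¬(z.re = 0 ∨ z.im = 0) :=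
        (ae_iff.2 (by
          convert aux_axes_null using 2
          ext z; simp only [Set.mem_setOf_eq]; tauto))
      refine ae_restrict_of_ae (hae.mono fun z hz => ?_)
      push_neg at hz
      have hre : (0:ℝ) < |z.re| := abs_pos.2 hz.1
      have him : (0:ℝ) < |z.im| := abs_pos.2 hz.2
      have hBnn : 0 ≤ B := le_trans (norm_nonneg _) (hB 0)
      have key : (‖z‖)⁻¹ ≤ |z.re| ^ (-2⁻¹ : ℝ) * |z.im| ^ (-2⁻¹ : ℝ) := by
        have h1 : |z.re| ^ (-2⁻¹ : ℝ) * |z.im| ^ (-2⁻¹ : ℝ)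
            = (Real.sqrt (|z.re| * |z.im|))⁻¹ := by
          rw [Real.sqrt_eq_rpow, ← Real.rpow_neg (by positivity),
            Real.mul_rpow (abs_nonneg _) (abs_nonneg _)]
          norm_num
        rw [h1]
        have h2 : Real.sqrt (|z.re| * |z.im|) ≤ ‖z‖ := by
          rw [Complex.norm_def, Complex.normSq_apply]
          apply Real.sqrt_le_sqrt
          nlinarith [sq_nonneg (|z.re| - |z.im|), abs_mul_abs_self z.re,
            abs_mul_abs_self z.im]
        exact inv_anti₀ (Real.sqrt_pos.2 (by positivity)) h2
      calc ‖‖b z‖ * (‖z‖)⁻¹‖ = ‖b z‖ * (‖z‖)⁻¹ := by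
            rw [Real.norm_eq_abs, _root_.abs_of_nonneg (by positivity)]
        _ ≤ B * (|z.re| ^ (-2⁻¹ : ℝ) * |z.im| ^ (-2⁻¹ : ℝ)) :=
            mul_le_mul (hB z) key (by positivity) hBnn
  -- support inside T
  have hsupp : Function.support (fun z : ℂ => ‖b z‖ * (‖z‖)⁻¹) ⊆ T := by
    intro z hz
    have hbz : b z ≠ 0 := by
      intro h0; apply hz; simp [h0]
    have hzK : z ∈ tsupport b := subset_tsupport b hbz
    have := hR' hzK
    rw [Metric.mem_closedBall, dist_zero_right] at this
    have hre : |z.re| ≤ R := le_trans (le_trans (Complex.abs_re_le_norm z) this)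
      (by rw [hRdef]; linarith [le_abs_self R'])
    have him : |z.im| ≤ R := le_trans (le_trans (Complex.abs_im_le_norm z) this)
      (by rw [hRdef]; linarith [le_abs_self R'])
    simp only [hTdef, Set.mem_preimage, Set.mem_prod, Set.mem_Icc,
      Complex.measurableEquivRealProd, Complex.equivRealProd]
    constructor
    · exact ⟨neg_le_of_abs_le hre, le_of_abs_le hre⟩
    · exact ⟨neg_le_of_abs_le him, le_of_abs_le him⟩
  have := hIT.integrable_of_forall_notMem_eq_zero ?_
  · exact this
  · intro z hz
    by_contra h0
    exact hz (hsupp h0)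

set_option maxHeartbeats 1000000 in
/-- if b is continuous with compact support and μ(w,·) is a bounded
solution of the integral equation
μ(w,λ) = 1 + (1/(8π²i)) ∫ (b(λ')/((λ'−λ)λ̄')) e^{λ̄'w̄−λ'w} conj(μ(w,λ')) dλ'∧dλ̄'
(with dλ'∧dλ̄' = −2i dA), then μ(w,λ) − 1 → 0 as |λ| → ∞. -/
theorem mu_tendsto_one_at_infinity
    (b : ℂ → ℂ) (hb : Continuous b) (hbs : HasCompactSupport b)
    (w : ℂ) (μ : ℂ → ℂ) (M : ℝ)
    (hM : ∀ lam : ℂ, ‖μ lam‖ ≤ M)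
    (heq : ∀ lam : ℂ, μ lam =
      1 + 1 / (8 * (Real.pi : ℂ) ^ 2 * Complex.I) *
        ((-2 * Complex.I) *
          ∫ lam' : ℂ,
            b lam' / ((lam' - lam) * (starRingEnd ℂ) lam')
              * Complex.exp ((starRingEnd ℂ) lam' * (starRingEnd ℂ) w - lam' * w)
              * (starRingEnd ℂ) (μ lam'))) :
    Tendsto (fun lam : ℂ => μ lam - 1) (comap (fun z : ℂ => ‖z‖) atTop) (nhds 0) := by
  obtain ⟨R', hR'⟩ := hbs.isCompact.isBounded.subset_closedBall 0
  set R0 : ℝ := max R' 0 with hR0def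
  have hR0 : 0 ≤ R0 := le_max_right _ _
  have hsupp : tsupport b ⊆ Metric.closedBall 0 R0 :=
    hR'.trans (Metric.closedBall_subset_closedBall (le_max_left _ _))
  have key := aux_key b hb hbs
  set I₀ : ℝ := ∫ z : ℂ, ‖b z‖ * (‖z‖)⁻¹ with hI₀def
  have hI₀ : 0 ≤ I₀ := integral_nonneg fun z => by positivity
  set M' : ℝ := max M 0 with hM'def
  have hM' : ∀ lam, ‖μ lam‖ ≤ M' := fun lam => (hM lam).trans (le_max_left _ _)
  have hM'0 : 0 ≤ M' := le_max_right _ _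
  set c : ℂ := 1 / (8 * (Real.pi : ℂ) ^ 2 * Complex.I) * (-2 * Complex.I) with hcdef
  set D : ℝ := ‖c‖ * (M' * I₀) with hDdef
  have hD : 0 ≤ D := by rw [hDdef]; exact mul_nonneg (norm_nonneg _) (mul_nonneg hM'0 hI₀)
  -- main bound
  have hbound : ∀ lam : ℂ, R0 + 1 ≤ ‖lam‖ →
      ‖μ lam - 1‖ ≤ D * (‖lam‖ - R0)⁻¹ := by
    intro lam hlam
    have hA : (0:ℝ) < ‖lam‖ - R0 := by linarith
    set f : ℂ → ℂ := fun lam' =>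
      b lam' / ((lam' - lam) * (starRingEnd ℂ) lam')
        * Complex.exp ((starRingEnd ℂ) lam' * (starRingEnd ℂ) w - lam' * w)
        * (starRingEnd ℂ) (μ lam') with hfdef
    have hmu : μ lam - 1 = c * ∫ lam', f lam' := by
      rw [heq lam, hcdef]; ring
    have hpt : ∀ lam' : ℂ, ‖f lam'‖ ≤
        (‖lam‖ - R0)⁻¹ * (M' * (‖b lam'‖ * (‖lam'‖)⁻¹)) := by
      intro lam'
      by_cases hbz : b lam' = 0
      · simp [hfdef, hbz]
      · have hmem : lam' ∈ tsupport b := subset_tsupport b hbz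
        have habs' : ‖lam'‖ ≤ R0 := by
          have := hsupp hmem
          rwa [Metric.mem_closedBall, dist_zero_right] at this
        have hdist : ‖lam‖ - R0 ≤ ‖lam' - lam‖ := by
          have h1 : ‖lam‖ - ‖lam'‖ ≤ ‖lam - lam'‖ := norm_sub_norm_le lam lam'
          rw [norm_sub_rev] at h1
          linarith
        have hexp : ‖Complex.exp
            ((starRingEnd ℂ) lam' * (starRingEnd ℂ) w - lam' * w)‖ = 1 := by
          rw [Complex.norm_exp]
          convert Real.exp_zero using 2
          simp [Complex.sub_re, Complex.mul_re]
        have hnorm : ‖f lam'‖ = ‖b lam'‖ *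
            ((‖lam' - lam‖)⁻¹ * (‖lam'‖)⁻¹) * ‖μ lam'‖ := by
          simp only [hfdef, norm_mul, norm_div, Complex.norm_conj, hexp]
          rw [div_eq_mul_inv, mul_inv]
          ring
        rw [hnorm]
        have h2 : (‖lam' - lam‖)⁻¹ ≤ (‖lam‖ - R0)⁻¹ :=
          inv_anti₀ hA hdist
        calc ‖b lam'‖ * ((‖lam' - lam‖)⁻¹ * (‖lam'‖)⁻¹)
              * ‖μ lam'‖
            ≤ ‖b lam'‖ * ((‖lam‖ - R0)⁻¹ * (‖lam'‖)⁻¹) * M' := by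
              gcongr <;> first | exact h2 | exact hM' lam'
          _ = (‖lam‖ - R0)⁻¹ * (M' * (‖b lam'‖ * (‖lam'‖)⁻¹)) := by ring
    have hint : ‖∫ lam', f lam'‖ ≤ (‖lam‖ - R0)⁻¹ * (M' * I₀) := by
      refine (norm_integral_le_integral_norm f).trans ?_
      have hgint : Integrable (fun lam' : ℂ =>
          (‖lam‖ - R0)⁻¹ * (M' * (‖b lam'‖ * (‖lam'‖)⁻¹))) :=
        (key.const_mul M').const_mul _
      have := integral_mono_of_nonneg (Filter.Eventually.of_forall fun lam' => norm_nonneg (f lam'))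
        hgint (Filter.Eventually.of_forall hpt)
      rwa [integral_const_mul, integral_const_mul] at this
    rw [hmu]
    rw [norm_mul]
    calc ‖c‖ * ‖∫ lam', f lam'‖
        ≤ ‖c‖ * ((‖lam‖ - R0)⁻¹ * (M' * I₀)) :=
          mul_le_mul_of_nonneg_left hint (norm_nonneg _)
      _ = D * (‖lam‖ - R0)⁻¹ := by rw [hDdef]; ring
  -- assemble tendsto
  have habsT : Tendsto (fun lam : ℂ => ‖lam‖) (comap (fun z : ℂ => ‖z‖) atTop) atTop :=
    tendsto_comap
  have hg0 : Tendsto (fun t : ℝ => D * (t - R0)⁻¹) atTop (nhds 0) := by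
    have h1 : Tendsto (fun t : ℝ => t - R0) atTop atTop :=
      tendsto_atTop_add_const_right atTop (-R0) tendsto_id
    have := h1.inv_tendsto_atTop.const_mul D
    simpa using this
  have hgT : Tendsto (fun lam : ℂ => D * (‖lam‖ - R0)⁻¹)
      (comap (fun z : ℂ => ‖z‖) atTop) (nhds 0) := hg0.comp habsT
  rw [tendsto_zero_iff_norm_tendsto_zero]
  refine squeeze_zero' (Filter.Eventually.of_forall fun lam => norm_nonneg _) ?_ hgT
  filter_upwards [habsT.eventually_ge_atTop (R0 + 1)] with lam hlam
  exact hbound lam hlam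
end
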